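/- arXiv:1804.09657 — 3 statements merged into one kernel-verified Lean document; each statement's English description precedes it below -/
import Mathlib

section
/- Let γ ≥ 1, T ≥ 1, let τ be a stopping time of (F_t), and let c ≥ 0 be a constant. If c·1{τ ≥ γ} ≤ P_γ(τ = γ | F_{γ−1}) holds P_γ-almost surely (where P_γ(· | F_{γ−1}) denotes conditional probability given F_{γ−1}), then c·P∞(τ ≥ γ) ≤ E∞[ℓ(X_γ)·1{τ = γ}]. -/
open MeasureTheory ProbabilityTheory MeasurableSpace Set
open scoped ENNReal

/-- The natural filtration `F_t = σ(X_1, …, X_t)` on the sequence space. -/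
def natF (E : Type*) [MeasurableSpace E] (t : ℕ) : MeasurableSpace (ℕ → E) :=
  ⨆ i ∈ Finset.Icc 1 t, MeasurableSpace.comap (fun ω : ℕ → E => ω i) inferInstance

section Aux

variable {E : Type*} [MeasurableSpace E]

lemma natF_le (k : ℕ) : natF E k ≤ MeasurableSpace.pi :=
  iSup₂_le fun i _ => measurable_iff_comap_le.1 (measurable_pi_apply i)

lemma natF_mono {a b : ℕ} (h : a ≤ b) : natF E a ≤ natF E b :=
  biSup_mono fun i hi => Finset.Icc_subset_Icc_right h hi

lemma natF_eq_gen (k : ℕ) :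
    natF E k = generateFrom (piiUnionInter
      (fun n => {s | MeasurableSet[MeasurableSpace.comap (fun ω : ℕ → E => ω n) inferInstance] s})
      ↑(Finset.Icc 1 k)) := by
  rw [natF]
  exact (generateFrom_piiUnionInter_measurableSet _ _).symm

/-- π-system extension lemma: two finite measures agreeing on all finite cylinders with
coordinates in `Icc 1 k` agree on `natF E k`. -/
lemma measure_eq_on_natF {P Q : Measure (ℕ → E)} [IsFiniteMeasure P] (k : ℕ)
    (h : ∀ t : Finset ℕ, ↑t ⊆ (Finset.Icc 1 k : Finset ℕ) → ∀ A : ℕ → Set E,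
      (∀ n, MeasurableSet (A n)) →
      P (⋂ n ∈ t, (fun ω : ℕ → E => ω n) ⁻¹' A n)
        = Q (⋂ n ∈ t, (fun ω : ℕ → E => ω n) ⁻¹' A n))
    {s : Set (ℕ → E)} (hs : MeasurableSet[natF E k] s) : P s = Q s := by
  refine ext_on_measurableSpace_of_generate_finite MeasurableSpace.pi _ ?_ (natF_le k)
    (natF_eq_gen k) (isPiSystem_piiUnionInter _
      (fun n => @isPiSystem_measurableSet _ (MeasurableSpace.comap _ _)) _) ?_ hs
  · rintro u ⟨t, hts, f, hf, rfl⟩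
    classical
    set A : ℕ → Set E := fun n =>
      if hn : ∃ B, MeasurableSet B ∧ (fun ω : ℕ → E => ω n) ⁻¹' B = f n then hn.choose else univ
      with hA_def
    have hAmeas : ∀ n, MeasurableSet (A n) := by
      intro n
      by_cases hn : ∃ B, MeasurableSet B ∧ (fun ω : ℕ → E => ω n) ⁻¹' B = f n
      · simp only [hA_def, dif_pos hn]; exact hn.choose_spec.1
      · simp only [hA_def, dif_neg hn]; exact MeasurableSet.univ
    have hfn : ∀ n ∈ t, (fun ω : ℕ → E => ω n) ⁻¹' A n = f n := by
      intro n hn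
      obtain ⟨B, hB, hBf⟩ := hf n hn
      have hex : ∃ B, MeasurableSet B ∧ (fun ω : ℕ → E => ω n) ⁻¹' B = f n := ⟨B, hB, hBf⟩
      simp only [hA_def, dif_pos hex]
      exact hex.choose_spec.2
    have heq : (⋂ n ∈ t, f n) = ⋂ n ∈ t, (fun ω : ℕ → E => ω n) ⁻¹' A n :=
      (Set.iInter₂_congr hfn).symm
    rw [heq]
    exact h t (fun n hn => hts hn) A hAmeas
  · simpa using h ∅ (by simp) (fun _ => univ) (fun _ => MeasurableSet.univ)

lemma meas_biInter_eval {P : Measure (ℕ → E)}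
    (hP : iIndepFun (m := fun _ : ℕ => (inferInstance : MeasurableSpace E))
      (fun t (ω : ℕ → E) => ω t) P)
    (t : Finset ℕ) (A : ℕ → Set E) (hA : ∀ n, MeasurableSet (A n)) :
    P (⋂ n ∈ t, (fun ω : ℕ → E => ω n) ⁻¹' A n)
      = ∏ n ∈ t, P.map (fun ω : ℕ → E => ω n) (A n) := by
  rw [hP.meas_biInter (fun n _ => ⟨A n, hA n, rfl⟩)]
  exact Finset.prod_congr rfl fun n _ =>
    (Measure.map_apply (measurable_pi_apply n) (hA n)).symm

end Aux

theorem stmt_3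
    {E : Type*} [MeasurableSpace E]
    (μ0 μ1 : Measure E) [IsProbabilityMeasure μ0] [IsProbabilityMeasure μ1]
    (hac : μ1 ≪ μ0)
    (T : ℕ) (hT : 1 ≤ T) (γ : ℕ) (hγ : 1 ≤ γ)
    (Pinf Pγ : Measure (ℕ → E))
    [IsProbabilityMeasure Pinf] [IsProbabilityMeasure Pγ]
    (hPinf_indep :
      iIndepFun (m := fun _ : ℕ => (inferInstance : MeasurableSpace E))
        (fun t (ω : ℕ → E) => ω t) Pinf)
    (hPinf_marg : ∀ t : ℕ, Pinf.map (fun ω => ω t) = μ0)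
    (hPγ_indep :
      iIndepFun (m := fun _ : ℕ => (inferInstance : MeasurableSpace E))
        (fun t (ω : ℕ → E) => ω t) Pγ)
    (hPγ_marg : ∀ t : ℕ,
      Pγ.map (fun ω => ω t) = if γ ≤ t ∧ t < γ + T then μ1 else μ0)
    (τ : (ℕ → E) → ℕ∞)
    (hτ1 : ∀ ω, 1 ≤ τ ω)
    (hτ_stop : ∀ t : ℕ, MeasurableSet[natF E t] {ω | τ ω ≤ (t : ℕ∞)})
    (c : ℝ) (hc0 : 0 ≤ c)
    (hc : ∀ᵐ ω ∂Pγ,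
      c * ({ω' | (γ : ℕ∞) ≤ τ ω'}.indicator (fun _ => (1 : ℝ)) ω)
        ≤ (Pγ[{ω' | τ ω' = (γ : ℕ∞)}.indicator (fun _ => (1 : ℝ)) |
            natF E (γ - 1)]) ω) :
    ENNReal.ofReal c * Pinf {ω | (γ : ℕ∞) ≤ τ ω}
      ≤ ∫⁻ ω in {ω | τ ω = (γ : ℕ∞)}, μ1.rnDeriv μ0 (ω γ) ∂Pinf := by
  classical
  set ℓ : E → ℝ≥0∞ := μ1.rnDeriv μ0 with hℓ_def
  have hℓ_meas : Measurable ℓ := Measure.measurable_rnDeriv μ1 μ0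
  set S₁ : Set (ℕ → E) := {ω | (γ : ℕ∞) ≤ τ ω} with hS₁_def
  set S₂ : Set (ℕ → E) := {ω | τ ω = (γ : ℕ∞)} with hS₂_def
  -- basic facts about casts
  have hcast : ((γ - 1 : ℕ) : ℕ∞) + 1 = (γ : ℕ∞) := by
    exact_mod_cast congrArg (Nat.cast : ℕ → ℕ∞) (Nat.sub_add_cancel hγ)
  have hlt_iff : ∀ ω, ((γ - 1 : ℕ) : ℕ∞) < τ ω ↔ (γ : ℕ∞) ≤ τ ω := by
    intro ω
    rw [← ENat.add_one_le_iff (by exact (ENat.coe_ne_top _)), hcast]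
  -- measurability of the two events
  have hS₁F : MeasurableSet[natF E (γ - 1)] S₁ := by
    have : S₁ = {ω | τ ω ≤ ((γ - 1 : ℕ) : ℕ∞)}ᶜ := by
      ext ω
      simp only [hS₁_def, mem_setOf_eq, mem_compl_iff, not_le, hlt_iff ω]
    rw [this]
    exact (hτ_stop (γ - 1)).compl
  have hS₂F : MeasurableSet[natF E γ] S₂ := by
    have : S₂ = {ω | τ ω ≤ (γ : ℕ∞)} ∩ S₁ := by
      ext ω
      simp only [hS₂_def, hS₁_def, mem_setOf_eq, mem_inter_iff]
      exact le_antisymm_iff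
    rw [this]
    exact (hτ_stop γ).inter (natF_mono (Nat.sub_le γ 1) _ hS₁F)
  have hS₁m : MeasurableSet S₁ := natF_le (γ - 1) _ hS₁F
  have hS₂m : MeasurableSet S₂ := natF_le γ _ hS₂F
  -- Step A : Pγ S₁ = Pinf S₁
  have stepA : Pγ S₁ = Pinf S₁ := by
    refine measure_eq_on_natF (γ - 1) ?_ hS₁F
    intro t hts A hA
    rw [meas_biInter_eval hPγ_indep t A hA, meas_biInter_eval hPinf_indep t A hA]
    refine Finset.prod_congr rfl fun n hn => ?_
    have hn' : n ≤ γ - 1 := (Finset.mem_Icc.1 (hts hn)).2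
    rw [hPγ_marg, hPinf_marg, if_neg]
    rintro ⟨h1, -⟩
    omega
  -- Step B : ENNReal.ofReal c * Pγ S₁ ≤ Pγ S₂
  have hle : natF E (γ - 1) ≤ MeasurableSpace.pi := natF_le (γ - 1)
  haveI : SigmaFinite (Pγ.trim hle) := inferInstance
  have stepB : ENNReal.ofReal c * Pγ S₁ ≤ Pγ S₂ := by
    have hint1 : Integrable (fun ω => c * S₁.indicator (fun _ => (1 : ℝ)) ω) Pγ :=
      (((integrable_const (1 : ℝ)).indicator hS₁m)).const_mul c
    have h1 := integral_mono_ae hint1 integrable_condExp hc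
    rw [integral_condExp hle] at h1
    rw [MeasureTheory.integral_const_mul, integral_indicator_const (1 : ℝ) hS₁m,
      integral_indicator_const (1 : ℝ) hS₂m, smul_eq_mul, smul_eq_mul, mul_one, mul_one] at h1
    have h2 := ENNReal.ofReal_le_ofReal h1
    rwa [ENNReal.ofReal_mul hc0, ofReal_measureReal (measure_ne_top _ _),
      ofReal_measureReal (measure_ne_top _ _)] at h2
  -- Step C : Pγ S₂ = ∫⁻ ω in S₂, ℓ (ω γ) ∂Pinf
  have stepC : Pγ S₂ = ∫⁻ ω in S₂, ℓ (ω γ) ∂Pinf := by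
    have hkey : Pγ S₂ = (Pinf.withDensity (fun ω => ℓ (ω γ))) S₂ := by
      refine measure_eq_on_natF γ ?_ hS₂F
      intro t hts A hA
      set t' := t.erase γ with ht'_def
      set B : Set E := if γ ∈ t then A γ else univ with hB_def
      have hBmeas : MeasurableSet B := by
        by_cases h : γ ∈ t <;> simp [hB_def, h, hA γ]
      set C : Set (ℕ → E) := ⋂ n ∈ t', (fun ω : ℕ → E => ω n) ⁻¹' A n with hC_def
      have hCmeas : MeasurableSet C :=
        Finset.measurableSet_biInter _ fun n _ => (hA n).preimage (measurable_pi_apply n)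
      have hsplit : (⋂ n ∈ t, (fun ω : ℕ → E => ω n) ⁻¹' A n)
          = C ∩ ((fun ω : ℕ → E => ω γ) ⁻¹' B) := by
        by_cases h : γ ∈ t
        · rw [hB_def, if_pos h]
          conv_lhs => rw [← Finset.insert_erase h]
          rw [Finset.set_biInter_insert, ← ht'_def, ← hC_def, Set.inter_comm]
        · rw [hB_def, if_neg h, preimage_univ, inter_univ, hC_def, ht'_def,
            Finset.erase_eq_of_notMem h]
      have hsm : MeasurableSet (C ∩ ((fun ω : ℕ → E => ω γ) ⁻¹' B)) :=
        hCmeas.inter (hBmeas.preimage (measurable_pi_apply γ))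
      -- independence of the two factors
      have hev : ∀ i : ℕ, Measurable fun ω : ℕ → E => ω i := measurable_pi_apply
      have hdisj : Disjoint t' ({γ} : Finset ℕ) :=
        Finset.disjoint_singleton_right.2 (Finset.notMem_erase γ t)
      have hind0 := hPinf_indep.indepFun_finset t' {γ} hdisj hev
      set φ : (↥t' → E) → ℝ≥0∞ :=
        fun x => (Set.univ.pi fun i : ↥t' => A ↑i).indicator (fun _ => (1 : ℝ≥0∞)) x with hφ_def
      set ψ : (↥({γ} : Finset ℕ) → E) → ℝ≥0∞ :=
        fun x => B.indicator ℓ (x ⟨γ, Finset.mem_singleton_self γ⟩) with hψ_def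
      have hφm : Measurable φ :=
        measurable_const.indicator (MeasurableSet.univ_pi fun i => hA ↑i)
      have hψm : Measurable ψ :=
        (hℓ_meas.indicator hBmeas).comp (measurable_pi_apply _)
      have hind := hind0.comp hφm hψm
      have heq1 : (φ ∘ fun (ω : ℕ → E) (i : ↥t') => ω ↑i)
          = C.indicator (fun _ => (1 : ℝ≥0∞)) := by
        funext ω
        have hmem : ((fun i : ↥t' => ω ↑i) ∈ Set.univ.pi fun i : ↥t' => A ↑i) ↔ ω ∈ C := by
          simp [hC_def, Set.mem_pi, Set.mem_iInter, Subtype.forall]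
        simp only [Function.comp_apply, hφ_def, Set.indicator_apply]
        exact if_congr hmem rfl rfl
      have heq2 : (ψ ∘ fun (ω : ℕ → E) (i : ↥({γ} : Finset ℕ)) => ω ↑i)
          = fun ω : ℕ → E => B.indicator ℓ (ω γ) := rfl
      rw [heq1, heq2] at hind
      -- compute RHS
      have hrhs : (Pinf.withDensity (fun ω => ℓ (ω γ)))
            (⋂ n ∈ t, (fun ω : ℕ → E => ω n) ⁻¹' A n)
          = Pinf C * μ1 B := by
        rw [hsplit, withDensity_apply _ hsm,
          ← lintegral_indicator hsm]
        have hpt : (C ∩ ((fun ω : ℕ → E => ω γ) ⁻¹' B)).indicator (fun ω => ℓ (ω γ))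
            = fun ω => C.indicator (fun _ => (1 : ℝ≥0∞)) ω * B.indicator ℓ (ω γ) := by
          funext ω
          by_cases h1 : ω ∈ C <;> by_cases h2 : ω γ ∈ B <;>
            simp [Set.indicator_apply, h1, h2, Set.mem_inter_iff]
        rw [hpt]
        have hmul := lintegral_mul_eq_lintegral_mul_lintegral_of_indepFun
            (measurable_const.indicator hCmeas) ((hℓ_meas.indicator hBmeas).comp (hev γ)) hind
        simp only [Pi.mul_apply, Function.comp_apply] at hmul
        show ∫⁻ ω, C.indicator (fun _ => (1 : ℝ≥0∞)) ω * B.indicator ℓ (ω γ) ∂Pinf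
          = Pinf C * μ1 B
        rw [hmul, lintegral_indicator hCmeas, setLIntegral_one]
        congr 1
        rw [← lintegral_map (hℓ_meas.indicator hBmeas) (hev γ), hPinf_marg γ,
          lintegral_indicator hBmeas ℓ, Measure.setLIntegral_rnDeriv hac]
      rw [hrhs, meas_biInter_eval hPγ_indep t A hA, meas_biInter_eval hPinf_indep t' A hA]
      have hmargγ : ∀ n ∈ t', Pinf.map (fun ω : ℕ → E => ω n) (A n) = μ0 (A n) := by
        intro n _; rw [hPinf_marg]
      have hmargPγ : ∀ n ∈ t', Pγ.map (fun ω : ℕ → E => ω n) (A n) = μ0 (A n) := by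
        intro n hn
        have hnt : n ∈ t := Finset.mem_of_mem_erase hn
        have hne : n ≠ γ := Finset.ne_of_mem_erase hn
        have hnle : n ≤ γ := (Finset.mem_Icc.1 (hts hnt)).2
        rw [hPγ_marg, if_neg]
        rintro ⟨h1, -⟩
        omega
      by_cases h : γ ∈ t
      · rw [← Finset.mul_prod_erase t _ h, ← ht'_def]
        rw [Finset.prod_congr rfl (fun n hn => hmargPγ n hn),
          Finset.prod_congr rfl (fun n hn => hmargγ n hn)]
        rw [hPγ_marg, if_pos ⟨le_refl γ, by omega⟩, hB_def, if_pos h]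
        exact mul_comm _ _
      · rw [ht'_def, Finset.erase_eq_of_notMem h] at hmargγ hmargPγ ⊢
        rw [Finset.prod_congr rfl (fun n hn => hmargPγ n hn),
          Finset.prod_congr rfl (fun n hn => hmargγ n hn),
          hB_def, if_neg h, measure_univ, mul_one]
    rw [hkey, withDensity_apply _ hS₂m]
  calc ENNReal.ofReal c * Pinf S₁ = ENNReal.ofReal c * Pγ S₁ := by rw [stepA]
    _ ≤ Pγ S₂ := stepB
    _ = ∫⁻ ω in S₂, ℓ (ω γ) ∂Pinf := stepC
end

section
/- (Lagrangian verification bound for Lemma 3.) Let L_1 be integrable, let λ > 0, and let c be the unique real number with E[(L_1 − c)⁺] = λ. Then for every stopping time τ of the natural filtration (F_t) with τ ≥ 1, P(τ < ∞) = 1, E[τ] < ∞, and L_τ integrable, one has E[L_τ] − λ·E[τ] ≤ c. -/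
/-!
Context: (L_t)_{t≥1} i.i.d. real random variables on (Ω, F, P), natural
filtration F_t = σ(L_1,…,L_t); a stopping time τ is ℕ≥1 ∪ {∞}-valued with
{τ ≤ t} ∈ F_t for all t; E denotes expectation under P; (x)⁺ := max(x,0).

STATEMENT 11 (Lagrangian verification bound for Lemma 3): let L_1 be
integrable, λ > 0, and c the unique real with E[(L_1 − c)⁺] = λ.  Then every
stopping time τ with τ ≥ 1, P(τ < ∞) = 1, E[τ] < ∞ and L_τ integrable
satisfies E[L_τ] − λ·E[τ] ≤ c.
-/

open MeasureTheory ProbabilityTheory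
open scoped ENNReal NNReal

/-- The natural filtration `F_t = σ(L_1, …, L_t)`. -/
def natFil {Ω : Type*} (L : ℕ → Ω → ℝ) (t : ℕ) : MeasurableSpace Ω :=
  ⨆ i ∈ Finset.Icc 1 t, MeasurableSpace.comap (L i) inferInstance

lemma enat_tsum_indicator (n : ℕ∞) :
    (∑' t : ℕ, if ((t + 1 : ℕ) : ℕ∞) ≤ n then (1 : ℝ≥0∞) else 0) = (n : ℝ≥0∞) := by
  cases n with
  | top =>
    simp only [le_top, if_true]
    simp [ENNReal.tsum_const_eq_top_of_ne_zero one_ne_zero]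
  | coe k =>
    have h : ∀ t : ℕ, (if ((t + 1 : ℕ) : ℕ∞) ≤ (k : ℕ∞) then (1 : ℝ≥0∞) else 0)
        = if t < k then 1 else 0 := by
      intro t
      refine if_congr ?_ rfl rfl
      rw [Nat.cast_le]; omega
    simp_rw [h]
    rw [tsum_eq_sum (s := Finset.range k) (by intro t ht; simp_all)]
    rw [Finset.sum_congr rfl (fun b hb => if_pos (Finset.mem_range.mp hb))]
    simp

theorem stmt_11
    {Ω : Type*} [MeasurableSpace Ω] (P : Measure Ω) [IsProbabilityMeasure P]
    (L : ℕ → Ω → ℝ)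
    (hmeas : ∀ n, 1 ≤ n → Measurable (L n))
    (hindep :
      iIndepFun
        (fun i : {n : ℕ // 1 ≤ n} => L i) P)
    (hident : ∀ n, 1 ≤ n → P.map (L n) = P.map (L 1))
    (hint : Integrable (L 1) P)
    (lam : ℝ) (hlam : 0 < lam)
    (c : ℝ) (hc : ∫ ω, max (L 1 ω - c) 0 ∂P = lam)
    (hc_uniq : ∀ c' : ℝ, (∫ ω, max (L 1 ω - c') 0 ∂P = lam) → c' = c)
    (τ : Ω → ℕ∞)
    (hτ1 : ∀ ω, 1 ≤ τ ω)
    (hτ_stop : ∀ t : ℕ, MeasurableSet[natFil L t] {ω | τ ω ≤ (t : ℕ∞)})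
    (hτ_fin : P {ω | τ ω ≠ ⊤} = 1)
    (hτ_int : ∫⁻ ω, (τ ω : ℝ≥0∞) ∂P < ⊤)
    (hLτ_int : Integrable (fun ω => L (τ ω).toNat ω) P) :
    (∫ ω, L (τ ω).toNat ω ∂P)
        - lam * (∫⁻ ω, (τ ω : ℝ≥0∞) ∂P).toReal ≤ c := by
  classical
  have hmeas' : ∀ t : ℕ, Measurable (L (t + 1)) := fun t => hmeas _ (Nat.le_add_left 1 t)
  -- φ : positive-part transform
  set φ : ℝ → ℝ≥0∞ := fun x => ENNReal.ofReal (max (x - c) 0) with hφdef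
  have hφ : Measurable φ := ((measurable_id.sub_const c).max measurable_const).ennreal_ofReal
  set A : ℕ → Set Ω := fun t => {ω | (t : ℕ∞) ≤ τ ω} with hAdef
  -- the natural filtration is below the ambient σ-algebra
  have hFil_le : ∀ t : ℕ, natFil L t ≤ ‹MeasurableSpace Ω› := by
    intro t
    refine iSup₂_le fun i hi => ?_
    exact (hmeas i (Finset.mem_Icc.mp hi).1).comap_le
  -- A (t+1) is measurable w.r.t. natFil L t
  have hA_eq : ∀ t : ℕ, A (t + 1) = {ω | τ ω ≤ (t : ℕ∞)}ᶜ := by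
    intro t
    ext ω
    simp only [hAdef, Set.mem_setOf_eq, Set.mem_compl_iff, not_le]
    constructor
    · intro h
      refine lt_of_lt_of_le ?_ h
      exact_mod_cast (by exact_mod_cast Nat.lt_succ_self t : ((t : ℕ∞) < ((t+1 : ℕ) : ℕ∞)))
    · intro h
      exact Order.add_one_le_of_lt (by exact_mod_cast h)
  have hA_fil : ∀ t : ℕ, MeasurableSet[natFil L t] (A (t + 1)) := by
    intro t
    rw [hA_eq t]
    exact (hτ_stop t).compl
  have hAmeas : ∀ t : ℕ, MeasurableSet (A (t + 1)) := fun t => hFil_le t _ (hA_fil t)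
  -- independence of natFil t and L (t+1)
  have hIndep : ∀ t : ℕ,
      Indep (natFil L t) (MeasurableSpace.comap (L (t + 1)) inferInstance) P := by
    intro t
    set mi : {n : ℕ // 1 ≤ n} → MeasurableSpace Ω :=
      fun i => MeasurableSpace.comap (L i) inferInstance with hmi
    have h_le : ∀ i, mi i ≤ ‹MeasurableSpace Ω› := fun i => (hmeas i i.2).comap_le
    have hST : Disjoint {i : {n : ℕ // 1 ≤ n} | (i : ℕ) ≤ t} {i : {n : ℕ // 1 ≤ n} | (i : ℕ) = t + 1} := by
      rw [Set.disjoint_left]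
      rintro i hi hi'
      simp only [Set.mem_setOf_eq] at hi hi'
      omega
    have hbig := indep_iSup_of_disjoint h_le hindep hST
    refine indep_of_indep_of_le_right (indep_of_indep_of_le_left hbig ?_) ?_
    · refine iSup₂_le fun i hi => ?_
      have h1 : 1 ≤ i := (Finset.mem_Icc.mp hi).1
      exact le_iSup₂ (f := fun i _ => mi i) (⟨i, h1⟩ : {n : ℕ // 1 ≤ n})
        ((Finset.mem_Icc.mp hi).2)
    · exact le_biSup mi (show (⟨t + 1, Nat.le_add_left 1 t⟩ : {n : ℕ // 1 ≤ n}) ∈ {i : {n : ℕ // 1 ≤ n} | (i : ℕ) = t + 1} from rfl)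
  -- each expected term equals lam * P (A (t+1))
  have hlam_int : Integrable (fun ω => max (L 1 ω - c) 0) P :=
    (hint.sub (integrable_const c)).pos_part
  have hφL : ∀ t : ℕ, ∫⁻ ω, φ (L (t + 1) ω) ∂P = ENNReal.ofReal lam := by
    intro t
    rw [← lintegral_map hφ (hmeas' t), hident (t + 1) (Nat.le_add_left 1 t),
      lintegral_map hφ (hmeas 1 le_rfl)]
    rw [hφdef]
    rw [← ofReal_integral_eq_lintegral_ofReal hlam_int
      (Filter.Eventually.of_forall fun ω => le_max_right _ _), hc]
  have hterm : ∀ t : ℕ,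
      ∫⁻ ω, (A (t + 1)).indicator (fun ω => φ (L (t + 1) ω)) ω ∂P
        = ENNReal.ofReal lam * P (A (t + 1)) := by
    intro t
    have hmul : ∀ ω, (A (t + 1)).indicator (fun ω => φ (L (t + 1) ω)) ω
        = φ (L (t + 1) ω) * (A (t + 1)).indicator (fun _ => (1 : ℝ≥0∞)) ω := by
      intro ω
      by_cases h : ω ∈ A (t + 1) <;> simp [Set.indicator_apply, h]
    simp_rw [hmul]
    rw [lintegral_mul_eq_lintegral_mul_lintegral_of_independent_measurableSpace
      (f := fun ω => φ (L (t + 1) ω))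
      (g := fun ω => (A (t + 1)).indicator (fun _ => (1 : ℝ≥0∞)) ω)
      ((hmeas' t).comap_le) (hFil_le t) ((hIndep t).symm)
      (hφ.comp (Measurable.of_comap_le le_rfl))
      ((measurable_const (a := (1 : ℝ≥0∞))).indicator (hA_fil t))]
    rw [hφL t]
    congr 1
    rw [lintegral_indicator (hAmeas t)]
    simp
  -- τ is a.e. finite
  have hτ_meas_fin : MeasurableSet {ω | τ ω ≠ ⊤} := by
    have heq : {ω | τ ω ≠ ⊤} = ⋃ t : ℕ, {ω | τ ω ≤ (t : ℕ∞)} := by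
      ext ω
      simp only [Set.mem_setOf_eq, Set.mem_iUnion]
      constructor
      · intro h
        cases hn : τ ω with
        | top => exact absurd hn h
        | coe k => exact ⟨k, by simp [hn]⟩
      · rintro ⟨t, ht⟩ h
        rw [h] at ht
        exact absurd ht (by simp)
    rw [heq]
    exact MeasurableSet.iUnion fun t => hFil_le t _ (hτ_stop t)
  have hae : ∀ᵐ ω ∂P, τ ω ≠ ⊤ := by
    rw [ae_iff]
    have h0 : P {ω | τ ω ≠ ⊤}ᶜ = 0 := by
      rw [measure_compl hτ_meas_fin (measure_ne_top _ _), hτ_fin, measure_univ]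
      simp
    exact h0
  -- key Wald-type inequality
  have key : ∫⁻ ω, ENNReal.ofReal (L (τ ω).toNat ω - c) ∂P
      ≤ ENNReal.ofReal lam * ∫⁻ ω, (τ ω : ℝ≥0∞) ∂P := by
    have hpt : ∀ᵐ ω ∂P, ENNReal.ofReal (L (τ ω).toNat ω - c)
        ≤ ∑' t : ℕ, (A (t + 1)).indicator (fun ω => φ (L (t + 1) ω)) ω := by
      filter_upwards [hae] with ω hω
      obtain ⟨k, hk⟩ : ∃ k : ℕ, τ ω = (k : ℕ∞) := by
        cases hn : τ ω with
        | top => exact absurd hn hω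
        | coe k => exact ⟨k, rfl⟩
      have hk1 : 1 ≤ k := by
        have h := hτ1 ω
        rw [hk] at h
        exact_mod_cast h
      obtain ⟨t, rfl⟩ : ∃ t, k = t + 1 := ⟨k - 1, by omega⟩
      have hmem : ω ∈ A (t + 1) := by
        simp only [hAdef, Set.mem_setOf_eq, hk, le_refl]
      have htoNat : (τ ω).toNat = t + 1 := by rw [hk]; exact ENat.toNat_coe (t + 1)
      calc ENNReal.ofReal (L (τ ω).toNat ω - c)
          ≤ (A (t + 1)).indicator (fun ω => φ (L (t + 1) ω)) ω := by
            rw [Set.indicator_of_mem hmem, htoNat, hφdef]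
            exact ENNReal.ofReal_le_ofReal (le_max_left _ _)
        _ ≤ ∑' s : ℕ, (A (s + 1)).indicator (fun ω => φ (L (s + 1) ω)) ω :=
            ENNReal.le_tsum t
    calc ∫⁻ ω, ENNReal.ofReal (L (τ ω).toNat ω - c) ∂P
        ≤ ∫⁻ ω, ∑' t : ℕ, (A (t + 1)).indicator (fun ω => φ (L (t + 1) ω)) ω ∂P :=
          lintegral_mono_ae hpt
      _ = ∑' t : ℕ, ∫⁻ ω, (A (t + 1)).indicator (fun ω => φ (L (t + 1) ω)) ω ∂P :=
          lintegral_tsum fun t => ((hφ.comp (hmeas' t)).indicator (hAmeas t)).aemeasurable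
      _ = ∑' t : ℕ, ENNReal.ofReal lam * P (A (t + 1)) := tsum_congr hterm
      _ = ENNReal.ofReal lam * ∑' t : ℕ, P (A (t + 1)) := ENNReal.tsum_mul_left
      _ = ENNReal.ofReal lam * ∫⁻ ω, (τ ω : ℝ≥0∞) ∂P := by
          congr 1
          calc ∑' t : ℕ, P (A (t + 1))
              = ∑' t : ℕ, ∫⁻ ω, (A (t + 1)).indicator (fun _ => (1 : ℝ≥0∞)) ω ∂P := by
                refine tsum_congr fun t => ?_
                rw [lintegral_indicator (hAmeas t)]
                simp
            _ = ∫⁻ ω, ∑' t : ℕ, (A (t + 1)).indicator (fun _ => (1 : ℝ≥0∞)) ω ∂P :=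
                (lintegral_tsum fun t =>
                  ((measurable_const (a := (1 : ℝ≥0∞))).indicator (hAmeas t)).aemeasurable).symm
            _ = ∫⁻ ω, (τ ω : ℝ≥0∞) ∂P := by
                refine lintegral_congr fun ω => ?_
                rw [← enat_tsum_indicator (τ ω)]
                refine tsum_congr fun t => ?_
                simp [Set.indicator_apply, hAdef, Set.mem_setOf_eq]
  -- pass to real integrals
  have hne : ∫⁻ ω, (τ ω : ℝ≥0∞) ∂P ≠ ⊤ := hτ_int.ne
  have hfin : ENNReal.ofReal lam * ∫⁻ ω, (τ ω : ℝ≥0∞) ∂P ≠ ⊤ :=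
    ENNReal.mul_ne_top ENNReal.ofReal_ne_top hne
  have hInt : Integrable (fun ω => max (L (τ ω).toNat ω - c) 0) P :=
    (hLτ_int.sub (integrable_const c)).pos_part
  have heq : ENNReal.ofReal (∫ ω, max (L (τ ω).toNat ω - c) 0 ∂P)
      = ∫⁻ ω, ENNReal.ofReal (L (τ ω).toNat ω - c) ∂P := by
    rw [ofReal_integral_eq_lintegral_ofReal hInt
      (Filter.Eventually.of_forall fun ω => le_max_right _ _)]
    refine lintegral_congr fun ω => ?_
    rcases le_total (L (τ ω).toNat ω - c) 0 with h | h
    · rw [max_eq_right h, ENNReal.ofReal_zero, eq_comm, ENNReal.ofReal_eq_zero]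
      exact h
    · rw [max_eq_left h]
  have h1 : ∫ ω, max (L (τ ω).toNat ω - c) 0 ∂P
      ≤ lam * (∫⁻ ω, (τ ω : ℝ≥0∞) ∂P).toReal := by
    have h2 := ENNReal.toReal_mono hfin (heq ▸ key)
    have hpos : (0 : ℝ) ≤ ∫ ω, max (L (τ ω).toNat ω - c) 0 ∂P :=
      integral_nonneg fun ω => le_max_right _ _
    rwa [ENNReal.toReal_ofReal hpos, ENNReal.toReal_mul,
      ENNReal.toReal_ofReal hlam.le] at h2
  have h3 : ∫ ω, (L (τ ω).toNat ω - c) ∂P ≤ ∫ ω, max (L (τ ω).toNat ω - c) 0 ∂P :=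
    integral_mono (hLτ_int.sub (integrable_const c)) hInt fun ω => le_max_left _ _
  have h4 : ∫ ω, (L (τ ω).toNat ω - c) ∂P = (∫ ω, L (τ ω).toNat ω ∂P) - c := by
    rw [integral_sub hLτ_int (integrable_const c), integral_const, probReal_univ]
    simp
  rw [h4] at h3
  linarith
end

section
/- (Lemma 3, ratio optimality of the Shewhart test.) Let L_1 be integrable and nonnegative, let η ≥ 1, and suppose α ∈ ℝ satisfies P(L_1 ≥ α) = 1/η and λ := E[(L_1 − α)⁺] > 0. Let τ_s := inf{t ≥ 1 : L_t ≥ α}. Then for every stopping time τ of the natural filtration with τ ≥ 1, P(τ < ∞) = 1, E[τ] = η, and L_τ integrable, one has E[L_τ]/E[τ] ≤ E[L_{τ_s}]/E[τ_s] = E[L_1·1{L_1 ≥ α}]. -/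
/-!
Context: (L_t)_{t≥1} i.i.d. real random variables on (Ω, F, P), natural
filtration F_t = σ(L_1,…,L_t); a stopping time τ is ℕ≥1 ∪ {∞}-valued with
{τ ≤ t} ∈ F_t for all t; E denotes expectation under P; (x)⁺ := max(x,0).

STATEMENT 13 (Lemma 3, ratio optimality of the Shewhart test): let L_1 be
integrable and nonnegative, η ≥ 1, α with P(L_1 ≥ α) = 1/η and
λ := E[(L_1 − α)⁺] > 0, and τ_s := inf{t ≥ 1 : L_t ≥ α}.  Then every stopping
time τ with τ ≥ 1, P(τ < ∞) = 1, E[τ] = η and L_τ integrable satisfies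
E[L_τ]/E[τ] ≤ E[L_{τ_s}]/E[τ_s] = E[L_1·1{L_1 ≥ α}].
-/

open MeasureTheory ProbabilityTheory Set
open scoped ENNReal NNReal

/-- First time `t ≥ 1` at which `hit t` occurs (`∞` if it never does). -/
noncomputable def firstHit {Ω : Type*} (hit : ℕ → Ω → Prop) (ω : Ω) : ℕ∞ :=
  sInf {t : ℕ∞ | ∃ n : ℕ, t = (n : ℕ∞) ∧ 1 ≤ n ∧ hit n ω}

section FH
variable {Ω : Type*} (hit : ℕ → Ω → Prop) (ω : Ω)

lemma firstHit_gt_iff (n : ℕ) :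
    (n : ℕ∞) < firstHit hit ω ↔ ∀ i, 1 ≤ i → i ≤ n → ¬ hit i ω := by
  constructor
  · intro h i h1 hin hhit
    have hmem : ((i : ℕ∞)) ∈ {t : ℕ∞ | ∃ m : ℕ, t = (m : ℕ∞) ∧ 1 ≤ m ∧ hit m ω} :=
      ⟨i, rfl, h1, hhit⟩
    have := lt_of_lt_of_le h (sInf_le hmem)
    exact absurd (Nat.cast_lt.mp this) (not_lt.2 hin)
  · intro h
    have : ((n : ℕ∞) + 1) ≤ firstHit hit ω := by
      apply le_sInf
      rintro b ⟨m, rfl, h1, hm⟩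
      have hnm : n < m := lt_of_not_ge fun hle => h m h1 hle hm
      exact_mod_cast Nat.succ_le_of_lt hnm
    exact (ENat.add_one_le_iff (by simp)).1 this

lemma firstHit_pos : 1 ≤ firstHit hit ω := by
  have h : ((0 : ℕ) : ℕ∞) < firstHit hit ω := by
    rw [firstHit_gt_iff]
    intro i h1 h0
    omega
  have h2 := (ENat.add_one_le_iff (m := 0) (n := firstHit hit ω) (by simp)).2 (by simpa using h)
  simpa using h2

lemma firstHit_eq_iff {n : ℕ} (hn : 1 ≤ n) :
    firstHit hit ω = (n : ℕ∞) ↔ hit n ω ∧ ∀ i, 1 ≤ i → i < n → ¬ hit i ω := by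
  constructor
  · intro h
    have hprev : ((n - 1 : ℕ) : ℕ∞) < firstHit hit ω := by
      rw [h]
      exact_mod_cast Nat.sub_lt hn one_pos
    rw [firstHit_gt_iff] at hprev
    have hno : ∀ i, 1 ≤ i → i < n → ¬ hit i ω := fun i h1 hi => hprev i h1 (by omega)
    refine ⟨?_, hno⟩
    by_contra hno_n
    have : (n : ℕ∞) < firstHit hit ω := by
      rw [firstHit_gt_iff]
      intro i h1 hi
      rcases lt_or_eq_of_le hi with hi' | hi'
      · exact hno i h1 hi'
      · subst hi'; exact hno_n
    rw [h] at this
    exact absurd this (lt_irrefl _)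
  · rintro ⟨hhit, hno⟩
    have h1 : firstHit hit ω ≤ (n : ℕ∞) := sInf_le ⟨n, rfl, hn, hhit⟩
    have h2 : ((n - 1 : ℕ) : ℕ∞) < firstHit hit ω := by
      rw [firstHit_gt_iff]
      exact fun i hi1 hi => hno i hi1 (by omega)
    have h3 := (ENat.add_one_le_iff (m := ((n - 1 : ℕ) : ℕ∞)) (by simp)).2 h2
    have h4 : ((n - 1 : ℕ) : ℕ∞) + 1 = (n : ℕ∞) := by
      have h5 : (n - 1) + 1 = n := by omega
      exact_mod_cast congrArg (Nat.cast : ℕ → ℕ∞) h5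
    rw [h4] at h3
    exact le_antisymm h1 h3

end FH

section Aux
variable {Ω : Type*} [mΩ : MeasurableSpace Ω] {P : Measure Ω} [IsProbabilityMeasure P]
  {L : ℕ → Ω → ℝ}

lemma natFil_le (hmeas : ∀ n, 1 ≤ n → Measurable (L n)) (t : ℕ) :
    natFil L t ≤ mΩ := by
  apply iSup₂_le
  intro i hi
  exact (hmeas i (Finset.mem_Icc.1 hi).1).comap_le

set_option linter.unusedSectionVars false

lemma lintegral_enat {σ : Ω → ℕ∞} (hσ : ∀ n : ℕ, MeasurableSet {ω | (n : ℕ∞) < σ ω}) :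
    ∫⁻ ω, (σ ω : ℝ≥0∞) ∂P = ∑' n : ℕ, P {ω | (n : ℕ∞) < σ ω} := by
  have key : ∀ ω, (σ ω : ℝ≥0∞)
      = ∑' n : ℕ, Set.indicator {ω' | (n : ℕ∞) < σ ω'} (fun _ => (1 : ℝ≥0∞)) ω := by
    intro ω
    have hi : ∀ n : ℕ, Set.indicator {ω' | (n : ℕ∞) < σ ω'} (fun _ => (1 : ℝ≥0∞)) ω
        = if (n : ℕ∞) < σ ω then 1 else 0 := fun n => Set.indicator_apply _ _ _
    simp_rw [hi]
    cases hcase : σ ω with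
    | top =>
      simp only [hcase, WithTop.coe_lt_top, if_true, ENat.toENNReal_top]
      exact (ENNReal.tsum_const_eq_top_of_ne_zero one_ne_zero).symm
    | coe k =>
      have h2 : ∀ n : ℕ, (if ((n : ℕ∞) < (k : ℕ∞)) then (1:ℝ≥0∞) else 0)
          = if n < k then 1 else 0 := by intro n; simp [Nat.cast_lt]
      simp only [hcase, h2]
      have hsum : (∑' n : ℕ, if n < k then (1:ℝ≥0∞) else 0)
          = ∑ n ∈ Finset.range k, (1:ℝ≥0∞) := by
        rw [tsum_eq_sum (s := Finset.range k)
          (by intro n hn; simp only [Finset.mem_range, not_lt] at hn; simp [Nat.not_lt.2 hn])]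
        exact Finset.sum_congr rfl (fun n hn => by simp [Finset.mem_range.1 hn])
      rw [hsum]
      simp
  rw [lintegral_congr key, lintegral_tsum
    (fun n => ((measurable_const.indicator (hσ n)).aemeasurable))]
  exact tsum_congr fun n => lintegral_indicator_one (hσ n)

lemma keyIndep (hmeas : ∀ n, 1 ≤ n → Measurable (L n))
    (hindep : iIndepFun
        (fun i : {n : ℕ // 1 ≤ n} => L i) P)
    {M n : ℕ} (hn : 1 ≤ n) (hMn : M < n) :
    Indep (natFil L M) (MeasurableSpace.comap (L n) inferInstance) P := by
  have h := indep_biSup_compl (m0 := mΩ)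
      (s := fun i : {n : ℕ // 1 ≤ n} => MeasurableSpace.comap (L (i : ℕ)) inferInstance)
      (fun i => (hmeas i i.2).comap_le) hindep.iIndep {i | (i : ℕ) ≤ M}
  refine indep_of_indep_of_le_left (indep_of_indep_of_le_right h ?_) ?_
  · exact le_biSup (fun i : {n : ℕ // 1 ≤ n} => MeasurableSpace.comap (L (i : ℕ)) inferInstance)
      (show (⟨n, hn⟩ : {n : ℕ // 1 ≤ n}) ∈ {i : {n : ℕ // 1 ≤ n} | (i : ℕ) ≤ M}ᶜ from
        by simp [hMn.not_ge])
  · apply iSup₂_le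
    intro i hi
    have hi' := Finset.mem_Icc.1 hi
    exact le_biSup (fun i : {n : ℕ // 1 ≤ n} => MeasurableSpace.comap (L (i : ℕ)) inferInstance)
      (show (⟨i, hi'.1⟩ : {n : ℕ // 1 ≤ n}) ∈ {i : {n : ℕ // 1 ≤ n} | (i : ℕ) ≤ M} from hi'.2)

variable (hmeas : ∀ n, 1 ≤ n → Measurable (L n))
    (hindep : iIndepFun
        (fun i : {n : ℕ // 1 ≤ n} => L i) P)

include hmeas hindep

lemma indep_meas {M n : ℕ} (hn : 1 ≤ n) (hMn : M < n)
    {B : Set Ω} (hB : MeasurableSet[natFil L M] B) {s : Set ℝ} (hs : MeasurableSet s) :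
    P (B ∩ L n ⁻¹' s) = P B * P (L n ⁻¹' s) :=
  (Indep_iff _ _ _).1 (keyIndep hmeas hindep hn hMn) B _ hB ⟨s, hs, rfl⟩

lemma indep_lintegral {M n : ℕ} (hn : 1 ≤ n) (hMn : M < n) {f : Ω → ℝ≥0∞}
    (hf : Measurable[MeasurableSpace.comap (L n) inferInstance] f)
    {B : Set Ω} (hB : MeasurableSet[natFil L M] B) :
    ∫⁻ ω in B, f ω ∂P = P B * ∫⁻ ω, f ω ∂P := by
  have hind := (keyIndep hmeas hindep hn hMn).symm
  have hBm : MeasurableSet B := natFil_le hmeas M B hB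
  have hsets : IndepSets {s | MeasurableSet[MeasurableSpace.comap (L n) inferInstance] s} {B} P := by
    apply indepSets_of_indepSets_of_le_right ((Indep_iff_IndepSets _ _ _).1 hind)
    rw [Set.singleton_subset_iff]
    exact hB
  have h := lintegral_mul_indicator_eq_lintegral_mul_lintegral_indicator
      (μ := P) (Mf := MeasurableSpace.comap (L n) inferInstance)
      ((hmeas n hn).comap_le) (1 : ℝ≥0∞) hBm hsets hf
  have heq : ∀ ω, B.indicator f ω = f ω * B.indicator (fun _ => (1 : ℝ≥0∞)) ω := by
    intro ω; by_cases hω : ω ∈ B <;> simp [hω]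
  have hone : ∫⁻ ω, B.indicator (fun _ => (1:ℝ≥0∞)) ω ∂P = P B := by
    rw [lintegral_indicator hBm]; simp
  rw [← lintegral_indicator hBm, lintegral_congr heq, h, hone, mul_comm]

lemma indep_integral {M n : ℕ} (hn : 1 ≤ n) (hMn : M < n) {ψ : ℝ → ℝ} (hψ : Measurable ψ)
    (hψint : Integrable (fun ω => ψ (L n ω)) P)
    {B : Set Ω} (hB : MeasurableSet[natFil L M] B) :
    ∫ ω in B, ψ (L n ω) ∂P = (P B).toReal * ∫ ω, ψ (L n ω) ∂P := by
  have hBm : MeasurableSet B := natFil_le hmeas M B hB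
  set X : Ω → ℝ := B.indicator (fun _ => (1 : ℝ)) with hX
  have hXY : IndepFun X (fun ω => ψ (L n ω)) P := by
    rw [IndepFun_iff_Indep]
    refine indep_of_indep_of_le_left (indep_of_indep_of_le_right
      (keyIndep hmeas hindep hn hMn) ?_) ?_
    · exact Measurable.comap_le (hψ.comp (Measurable.of_comap_le le_rfl))
    · exact Measurable.comap_le ((measurable_const (a := (1:ℝ))).indicator hB)
  have hXint : Integrable X P := (integrable_const (1:ℝ)).indicator hBm
  have h := hXY.integral_mul_eq_mul_integral hXint.aestronglyMeasurable hψint.aestronglyMeasurable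
  have heq : ∀ ω, (X * fun ω => ψ (L n ω)) ω = B.indicator (fun ω => ψ (L n ω)) ω := by
    intro ω; by_cases hω : ω ∈ B <;> simp [hX, hω]
  rw [integral_congr_ae (Filter.Eventually.of_forall heq)] at h
  have hone : ∫ ω, X ω ∂P = (P B).toReal := by
    rw [hX, integral_indicator hBm]; simp [measureReal_def]
  rw [← integral_indicator hBm, h, hone]

end Aux

set_option maxHeartbeats 1000000 in
theorem stmt_13
    {Ω : Type*} [MeasurableSpace Ω] (P : Measure Ω) [IsProbabilityMeasure P]
    (L : ℕ → Ω → ℝ)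
    (hmeas : ∀ n, 1 ≤ n → Measurable (L n))
    (hindep :
      iIndepFun
        (fun i : {n : ℕ // 1 ≤ n} => L i) P)
    (hident : ∀ n, 1 ≤ n → P.map (L n) = P.map (L 1))
    (hint : Integrable (L 1) P)
    (hnonneg : 0 ≤ᵐ[P] L 1)
    (η : ℝ≥0∞) (hη : 1 ≤ η)
    (α : ℝ) (hα : P {ω | α ≤ L 1 ω} = 1 / η)
    (hlam : 0 < ∫ ω, max (L 1 ω - α) 0 ∂P) :
    (∀ τ : Ω → ℕ∞, (∀ ω, 1 ≤ τ ω) →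
        (∀ t : ℕ, MeasurableSet[natFil L t] {ω | τ ω ≤ (t : ℕ∞)}) →
        P {ω | τ ω ≠ ⊤} = 1 →
        (∫⁻ ω, (τ ω : ℝ≥0∞) ∂P = η) →
        Integrable (fun ω => L (τ ω).toNat ω) P →
        (∫ ω, L (τ ω).toNat ω ∂P) / (∫⁻ ω, (τ ω : ℝ≥0∞) ∂P).toReal
          ≤ (∫ ω, L (firstHit (fun n ω' => α ≤ L n ω') ω).toNat ω ∂P)
              / (∫⁻ ω, (firstHit (fun n ω' => α ≤ L n ω') ω : ℝ≥0∞) ∂P).toReal) ∧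
      (∫ ω, L (firstHit (fun n ω' => α ≤ L n ω') ω).toNat ω ∂P)
          / (∫⁻ ω, (firstHit (fun n ω' => α ≤ L n ω') ω : ℝ≥0∞) ∂P).toReal
        = ∫ ω in {ω | α ≤ L 1 ω}, L 1 ω ∂P := by
  classical
  -- basic events
  set A : ℕ → Set Ω := fun n => {ω | α ≤ L n ω} with hAdef
  have hApre : ∀ n, A n = L n ⁻¹' (Set.Ici α) := fun n => rfl
  have hAmeas : ∀ n, 1 ≤ n → MeasurableSet (A n) := fun n hn => (hmeas n hn) measurableSet_Ici
  have hAcm : ∀ n, MeasurableSet[MeasurableSpace.comap (L n) inferInstance] (A n) :=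
    fun n => ⟨Set.Ici α, measurableSet_Ici, rfl⟩
  -- identical law transfers
  have plaw : ∀ n, 1 ≤ n → P (A n) = P (A 1) := by
    intro n hn
    rw [hApre n, hApre 1, ← Measure.map_apply (hmeas n hn) measurableSet_Ici,
      hident n hn, Measure.map_apply (hmeas 1 le_rfl) measurableSet_Ici]
  have hlint_map : ∀ φ : ℝ → ℝ≥0∞, Measurable φ → ∀ n, 1 ≤ n →
      ∫⁻ ω, φ (L n ω) ∂P = ∫⁻ ω, φ (L 1 ω) ∂P := by
    intro φ hφ n hn
    rw [← lintegral_map hφ (hmeas n hn), hident n hn, lintegral_map hφ (hmeas 1 le_rfl)]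
  have hint_map : ∀ ψ' : ℝ → ℝ, Measurable ψ' → ∀ n, 1 ≤ n →
      ∫ ω, ψ' (L n ω) ∂P = ∫ ω, ψ' (L 1 ω) ∂P := by
    intro ψ' hψ' n hn
    rw [← integral_map (hmeas n hn).aemeasurable hψ'.aestronglyMeasurable, hident n hn,
      integral_map (hmeas 1 le_rfl).aemeasurable hψ'.aestronglyMeasurable]
  have hintn : ∀ n, 1 ≤ n → Integrable (L n) P := by
    intro n hn
    have h1 : Integrable (id : ℝ → ℝ) (P.map (L 1)) :=
      (integrable_map_measure aestronglyMeasurable_id (hmeas 1 le_rfl).aemeasurable).2 hint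
    have h2 : Integrable (id : ℝ → ℝ) (P.map (L n)) := by rwa [hident n hn]
    exact (integrable_map_measure aestronglyMeasurable_id (hmeas n hn).aemeasurable).1 h2
  -- the truncation function
  set ψ : ℝ → ℝ := fun x => if α ≤ x then x else 0 with hψdef
  have hψmeas : Measurable ψ := measurable_id.ite measurableSet_Ici measurable_const
  have hψint : ∀ n, 1 ≤ n → Integrable (fun ω => ψ (L n ω)) P := by
    intro n hn
    refine Integrable.mono (hintn n hn) (hψmeas.comp (hmeas n hn)).aestronglyMeasurable
      (Filter.Eventually.of_forall fun ω => ?_)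
    simp only [Real.norm_eq_abs, hψdef]
    by_cases h : α ≤ L n ω <;> simp [h, abs_nonneg]
  have hψ_ind : ∀ n ω, (A n).indicator (L n) ω = ψ (L n ω) := by
    intro n ω
    by_cases h : ω ∈ A n
    · have h' : α ≤ L n ω := h
      rw [Set.indicator_of_mem h, hψdef]
      simp [h']
    · have h' : ¬ α ≤ L n ω := h
      rw [Set.indicator_of_notMem h, hψdef]
      simp [h']
  have hmax_int : Integrable (fun ω => max (L 1 ω - α) 0) P :=
    (hint.sub (integrable_const α)).pos_part
  -- probability facts
  have hp0 : P (A 1) ≠ 0 := by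
    intro h0
    have hsub : {ω | ¬ max (L 1 ω - α) 0 = 0} ⊆ A 1 := by
      intro ω hω
      simp only [Set.mem_setOf_eq] at hω
      by_contra hc
      have hlt : L 1 ω < α := lt_of_not_ge hc
      exact hω (max_eq_right (by linarith))
    have hae : (fun ω => max (L 1 ω - α) 0) =ᵐ[P] (fun _ => (0:ℝ)) := by
      rw [Filter.EventuallyEq, ae_iff]
      exact measure_mono_null hsub h0
    rw [integral_congr_ae hae, integral_const, smul_zero] at hlam
    exact lt_irrefl 0 hlam
  have hpA : P (A 1) = η⁻¹ := by rw [← one_div]; exact hα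
  have hηtop : η ≠ ⊤ := by
    intro h
    rw [hpA, h, ENNReal.inv_top] at hp0
    exact hp0 rfl
  have hη0 : η ≠ 0 := by
    intro h
    rw [h] at hη
    simp at hη
  have hple1 : P (A 1) ≤ 1 := prob_le_one
  have hηR : 0 < η.toReal := ENNReal.toReal_pos hη0 hηtop
  have hpinv : (P (A 1))⁻¹ = η := by rw [hpA, inv_inv]
  have hptoReal : (P (A 1)).toReal = η.toReal⁻¹ := by rw [hpA, ENNReal.toReal_inv]
  -- decomposition of the truncated mean
  have hm_eq : ∫ ω in A 1, L 1 ω ∂P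
      = (∫ ω, max (L 1 ω - α) 0 ∂P) + α * (P (A 1)).toReal := by
    rw [← integral_indicator (hAmeas 1 le_rfl)]
    have hpt : ∀ ω, (A 1).indicator (L 1) ω
        = max (L 1 ω - α) 0 + α * (A 1).indicator (fun _ => (1:ℝ)) ω := by
      intro ω
      by_cases h : ω ∈ A 1
      · have h' : α ≤ L 1 ω := h
        rw [Set.indicator_of_mem h, Set.indicator_of_mem h, max_eq_left (by linarith)]
        ring
      · have h' : ¬ α ≤ L 1 ω := h
        rw [Set.indicator_of_notMem h, Set.indicator_of_notMem h,
          max_eq_right (by linarith [lt_of_not_ge h'])]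
        ring
    rw [integral_congr_ae (Filter.Eventually.of_forall hpt),
      integral_add hmax_int (((integrable_const (1:ℝ)).indicator (hAmeas 1 le_rfl)).const_mul α)]
    congr 1
    rw [integral_const_mul]
    congr 1
    rw [integral_indicator (hAmeas 1 le_rfl)]
    simp [measureReal_def]
  have hψ1 : ∫ ω, ψ (L 1 ω) ∂P = ∫ ω in A 1, L 1 ω ∂P := by
    rw [← integral_indicator (hAmeas 1 le_rfl)]
    exact integral_congr_ae (Filter.Eventually.of_forall fun ω => (hψ_ind 1 ω).symm)
  -- the geometric tail
  set q : ℝ≥0∞ := 1 - P (A 1) with hqdef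
  have hq_le1 : q ≤ 1 := tsub_le_self
  have hq_top : q ≠ ⊤ := (hq_le1.trans_lt ENNReal.one_lt_top).ne
  have hsub1q : 1 - q = P (A 1) := ENNReal.sub_sub_cancel ENNReal.one_ne_top hple1
  have hq_lt1 : q < 1 := ENNReal.sub_lt_self ENNReal.one_ne_top one_ne_zero hp0
  have hgeom : ∑' n : ℕ, q ^ n = η := by
    rw [ENNReal.tsum_geometric, hsub1q, hpinv]
  -- the pre-hitting sets
  set Cs : ℕ → Set Ω := fun n => ⋂ i ∈ Finset.Icc 1 n, (A i)ᶜ with hCsdef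
  have hCsF : ∀ n, MeasurableSet[natFil L n] (Cs n) := by
    intro n
    apply Finset.measurableSet_biInter
    intro i hi
    exact ((le_biSup (fun i => MeasurableSpace.comap (L i) inferInstance) hi) (A i) (hAcm i)).compl
  have hCs_meas : ∀ n, MeasurableSet (Cs n) := fun n => natFil_le hmeas n _ (hCsF n)
  have PCs : ∀ n, P (Cs n) = q ^ n := by
    intro n
    induction n with
    | zero =>
      have huniv : Cs 0 = Set.univ := by
        rw [hCsdef]
        ext ω
        simp only [Set.mem_iInter, Finset.mem_Icc, Set.mem_univ, iff_true]
        intro i hi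
        omega
      rw [huniv]
      simp
    | succ n ih =>
      have hins : Finset.Icc 1 (n+1) = insert (n+1) (Finset.Icc 1 n) :=
        (Finset.insert_Icc_right_eq_Icc_add_one (by omega)).symm
      have hCseq : Cs (n+1) = Cs n ∩ (L (n+1) ⁻¹' (Set.Ici α)ᶜ) := by
        rw [hCsdef]
        simp only [hins, Finset.set_biInter_insert]
        rw [Set.inter_comm]
        rfl
      rw [hCseq, indep_meas hmeas hindep (by omega) (by omega) (hCsF n)
        measurableSet_Ici.compl, ih]
      have hcompl : P (L (n+1) ⁻¹' (Set.Ici α)ᶜ) = q := by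
        rw [Set.preimage_compl, prob_compl_eq_one_sub (by rw [← hApre]; exact hAmeas (n+1) (by omega)),
          ← hApre, plaw (n+1) (by omega), hqdef]
      rw [hcompl, pow_succ]
  -- the Shewhart stopping time
  set τs : Ω → ℕ∞ := firstHit (fun n ω' => α ≤ L n ω') with hτsdef
  have hgtset : ∀ n : ℕ, {ω | (n : ℕ∞) < τs ω} = Cs n := by
    intro n
    ext ω
    rw [Set.mem_setOf_eq, hτsdef, firstHit_gt_iff]
    simp only [hCsdef, Set.mem_iInter, Set.mem_compl_iff, Finset.mem_Icc, hAdef,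
      Set.mem_setOf_eq]
    constructor
    · intro h i hi; exact h i hi.1 hi.2
    · intro h i h1 h2; exact h i ⟨h1, h2⟩
  set Es : ℕ → Set Ω := fun k => {ω | τs ω = (k : ℕ∞)} with hEsdef
  have hEs0 : Es 0 = ∅ := by
    ext ω
    simp only [hEsdef, Set.mem_setOf_eq, Set.mem_empty_iff_false, iff_false]
    intro h
    have hpos := firstHit_pos (fun n ω' => α ≤ L n ω') ω
    rw [← hτsdef, h] at hpos
    simp at hpos
  have hEsS : ∀ n, Es (n+1) = Cs n ∩ A (n+1) := by
    intro n
    ext ω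
    simp only [hEsdef, Set.mem_setOf_eq, Set.mem_inter_iff]
    rw [hτsdef, firstHit_eq_iff _ _ (by omega : 1 ≤ n+1)]
    constructor
    · rintro ⟨hh, hno⟩
      refine ⟨?_, hh⟩
      simp only [hCsdef, Set.mem_iInter, Set.mem_compl_iff, Finset.mem_Icc, hAdef,
        Set.mem_setOf_eq]
      intro i hi
      exact hno i hi.1 (by omega)
    · rintro ⟨hc, hh⟩
      refine ⟨hh, fun i h1 hi => ?_⟩
      simp only [hCsdef, Set.mem_iInter, Set.mem_compl_iff, Finset.mem_Icc, hAdef,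
        Set.mem_setOf_eq] at hc
      exact hc i ⟨h1, by omega⟩
  have hEs_meas : ∀ k, MeasurableSet (Es k) := by
    intro k
    match k with
    | 0 => rw [hEs0]; exact MeasurableSet.empty
    | (n+1) => rw [hEsS n]; exact (hCs_meas n).inter (hAmeas (n+1) (by omega))
  have hEs_disj : Pairwise (Function.onFun Disjoint Es) := by
    intro i j hij
    simp only [Function.onFun, hEsdef]
    rw [Set.disjoint_left]
    intro ω hi hj
    simp only [Set.mem_setOf_eq] at hi hj
    rw [hi] at hj
    exact hij (by exact_mod_cast hj)
  have hUnionEs : (⋃ k, Es k) = {ω | τs ω ≠ ⊤} := by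
    ext ω
    simp only [Set.mem_iUnion, hEsdef, Set.mem_setOf_eq]
    constructor
    · rintro ⟨k, hk⟩; rw [hk]; simp
    · intro h
      cases hcase : τs ω with
      | top => exact absurd hcase h
      | coe k => exact ⟨k, rfl⟩
  have hsubsetCs : ∀ n : ℕ, {ω | τs ω = ⊤} ⊆ Cs n := by
    intro n
    rw [← hgtset n]
    intro ω h
    have h' : τs ω = ⊤ := h
    rw [Set.mem_setOf_eq, h']
    exact lt_of_le_of_ne le_top (by simp)
  have hnull_s : P {ω | τs ω = ⊤} = 0 := by
    have hb : ∀ n : ℕ, P {ω | τs ω = ⊤} ≤ q ^ n := fun n =>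
      (measure_mono (hsubsetCs n)).trans (PCs n).le
    have htend := ENNReal.tendsto_pow_atTop_nhds_zero_of_lt_one hq_lt1
    exact le_antisymm (ge_of_tendsto' htend hb) zero_le
  have hcompl_s : (⋃ k, Es k)ᶜ = {ω | τs ω = ⊤} := by
    rw [hUnionEs]
    ext ω
    simp
  have hres_s : P.restrict (⋃ k, Es k) = P := by
    rw [Measure.restrict_congr_set (ae_eq_univ.2 (by rw [hcompl_s]; exact hnull_s)),
      Measure.restrict_univ]
  have hτs_lint : ∫⁻ ω, (τs ω : ℝ≥0∞) ∂P = η := by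
    rw [lintegral_enat (fun n => by rw [hgtset n]; exact hCs_meas n)]
    rw [show (∑' n : ℕ, P {ω | (n : ℕ∞) < τs ω}) = ∑' n : ℕ, q ^ n from
      tsum_congr fun n => by rw [hgtset n, PCs n]]
    exact hgeom
  -- measurability of the stopped value
  have ht_meas : Measurable (fun ω => (τs ω).toNat) := by
    apply measurable_to_countable'
    intro k
    match k with
    | 0 =>
      have hpre : (fun ω => (τs ω).toNat) ⁻¹' {0} = Es 0 ∪ {ω | τs ω = ⊤} := by
        ext ω
        simp only [Set.mem_preimage, Set.mem_singleton_iff, Set.mem_union, hEsdef,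
          Set.mem_setOf_eq]
        cases hcase : τs ω with
        | top => simp [hcase]
        | coe j => simp [hcase]
      rw [hpre]
      exact (hEs_meas 0).union (by rw [← hcompl_s]; exact (MeasurableSet.iUnion hEs_meas).compl)
    | (j+1) =>
      have hpre : (fun ω => (τs ω).toNat) ⁻¹' {j+1} = Es (j+1) := by
        ext ω
        simp only [Set.mem_preimage, Set.mem_singleton_iff, hEsdef, Set.mem_setOf_eq]
        exact ENat.toNat_eq_iff (by omega)
      rw [hpre]
      exact hEs_meas (j+1)
  have hg_meas : Measurable (fun ω => if (τs ω).toNat = 0 then (0:ℝ) else L (τs ω).toNat ω) := by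
    have hF : Measurable (fun p : Ω × ℕ => if p.2 = 0 then (0:ℝ) else L p.2 p.1) := by
      apply measurable_from_prod_countable_left
      intro n
      by_cases hn : n = 0
      · simpa [hn] using (measurable_const : Measurable fun _ : Ω => (0:ℝ))
      · simpa [hn] using hmeas n (by omega)
    exact hF.comp (measurable_id.prodMk ht_meas)
  have hae_g : (fun ω => L (τs ω).toNat ω)
      =ᵐ[P] (fun ω => if (τs ω).toNat = 0 then (0:ℝ) else L (τs ω).toNat ω) := by
    rw [Filter.EventuallyEq, ae_iff]
    apply measure_mono_null _ hnull_s
    intro ω hω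
    simp only [Set.mem_setOf_eq] at hω ⊢
    by_contra hc
    apply hω
    have h1 : (τs ω).toNat ≠ 0 := by
      cases hcase : τs ω with
      | top => exact absurd hcase hc
      | coe j =>
        have hpos := firstHit_pos (fun n ω' => α ≤ L n ω') ω
        rw [← hτsdef, hcase] at hpos
        simp only [hcase, ENat.toNat_coe]
        intro h0
        rw [h0] at hpos
        simp at hpos
    simp [h1]
  have hAESM : AEStronglyMeasurable (fun ω => L (τs ω).toNat ω) P :=
    ⟨_, hg_meas.stronglyMeasurable, hae_g⟩
  -- integrability of the stopped value
  have hφabs : Measurable (fun x : ℝ => ENNReal.ofReal ‖x‖) :=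
    ENNReal.measurable_ofReal.comp measurable_norm
  have hK_lt : ∫⁻ ω, ENNReal.ofReal ‖L 1 ω‖ ∂P < ⊤ :=
    (hasFiniteIntegral_iff_norm _).1 hint.hasFiniteIntegral
  have hFin : HasFiniteIntegral (fun ω => L (τs ω).toNat ω) P := by
    rw [hasFiniteIntegral_iff_norm]
    have hdecomp : ∫⁻ ω, ENNReal.ofReal ‖L (τs ω).toNat ω‖ ∂P
        = ∑' k, ∫⁻ ω in Es k, ENNReal.ofReal ‖L (τs ω).toNat ω‖ ∂P := by
      conv_lhs => rw [← hres_s]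
      exact lintegral_iUnion hEs_meas hEs_disj _
    have h0 : ∫⁻ ω in Es 0, ENNReal.ofReal ‖L (τs ω).toNat ω‖ ∂P = 0 := by
      rw [hEs0]; simp
    have hterm : ∀ n, ∫⁻ ω in Es (n+1), ENNReal.ofReal ‖L (τs ω).toNat ω‖ ∂P
        ≤ q ^ n * ∫⁻ ω, ENNReal.ofReal ‖L 1 ω‖ ∂P := by
      intro n
      have hcongr : ∫⁻ ω in Es (n+1), ENNReal.ofReal ‖L (τs ω).toNat ω‖ ∂P
          = ∫⁻ ω in Es (n+1), ENNReal.ofReal ‖L (n+1) ω‖ ∂P := by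
        apply setLIntegral_congr_fun (hEs_meas (n+1))
        intro ω hω
        have hω' : τs ω = ((n+1 : ℕ) : ℕ∞) := hω
        simp only [hω', ENat.toNat_coe]
      rw [hcongr]
      calc ∫⁻ ω in Es (n+1), ENNReal.ofReal ‖L (n+1) ω‖ ∂P
          ≤ ∫⁻ ω in Cs n, ENNReal.ofReal ‖L (n+1) ω‖ ∂P :=
            lintegral_mono_set (by rw [hEsS n]; exact Set.inter_subset_left)
        _ = P (Cs n) * ∫⁻ ω, ENNReal.ofReal ‖L (n+1) ω‖ ∂P :=
            indep_lintegral hmeas hindep (by omega) (by omega)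
              (hφabs.comp (Measurable.of_comap_le le_rfl)) (hCsF n)
        _ = q ^ n * ∫⁻ ω, ENNReal.ofReal ‖L 1 ω‖ ∂P := by
            rw [PCs n, hlint_map _ hφabs (n+1) (by omega)]
    calc ∫⁻ ω, ENNReal.ofReal ‖L (τs ω).toNat ω‖ ∂P
        = ∑' k, ∫⁻ ω in Es k, ENNReal.ofReal ‖L (τs ω).toNat ω‖ ∂P := hdecomp
      _ = ∑' n, ∫⁻ ω in Es (n+1), ENNReal.ofReal ‖L (τs ω).toNat ω‖ ∂P := by
          rw [tsum_eq_zero_add' ENNReal.summable, h0, zero_add]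
      _ ≤ ∑' n, q ^ n * ∫⁻ ω, ENNReal.ofReal ‖L 1 ω‖ ∂P := ENNReal.tsum_le_tsum hterm
      _ = (∑' n : ℕ, q ^ n) * ∫⁻ ω, ENNReal.ofReal ‖L 1 ω‖ ∂P := ENNReal.tsum_mul_right
      _ < ⊤ := by
          rw [hgeom]
          exact ENNReal.mul_lt_top hηtop.lt_top hK_lt
  have hs_int : Integrable (fun ω => L (τs ω).toNat ω) P := ⟨hAESM, hFin⟩
  -- the Shewhart numerator
  have hterm_val : ∀ n, ∫ ω in Es (n+1), L (τs ω).toNat ω ∂P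
      = (q ^ n).toReal * ∫ ω in A 1, L 1 ω ∂P := by
    intro n
    have hcongr : ∫ ω in Es (n+1), L (τs ω).toNat ω ∂P = ∫ ω in Es (n+1), L (n+1) ω ∂P := by
      apply setIntegral_congr_fun (hEs_meas (n+1))
      intro ω hω
      have hω' : τs ω = ((n+1 : ℕ) : ℕ∞) := hω
      simp only [hω', ENat.toNat_coe]
    have hsub : ∫ ω in Es (n+1), L (n+1) ω ∂P = ∫ ω in Cs n, ψ (L (n+1) ω) ∂P := by
      rw [hEsS n, ← setIntegral_indicator (hAmeas (n+1) (by omega))]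
      exact setIntegral_congr_fun (hCs_meas n) (fun ω _ => (hψ_ind (n+1) ω))
    rw [hcongr, hsub, indep_integral hmeas hindep (by omega) (by omega) hψmeas
      (hψint (n+1) (by omega)) (hCsF n), PCs n,
      hint_map ψ hψmeas (n+1) (by omega), hψ1]
  have hNum : ∫ ω, L (τs ω).toNat ω ∂P = η.toReal * ∫ ω in A 1, L 1 ω ∂P := by
    have hdecomp : ∫ ω, L (τs ω).toNat ω ∂P = ∑' k, ∫ ω in Es k, L (τs ω).toNat ω ∂P := by
      conv_lhs => rw [← hres_s]
      exact integral_iUnion hEs_meas hEs_disj hs_int.integrableOn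
    have h0 : ∫ ω in Es 0, L (τs ω).toNat ω ∂P = 0 := by rw [hEs0]; simp
    have hqsum : Summable (fun n : ℕ => (q ^ n).toReal) :=
      ENNReal.summable_toReal (by rw [hgeom]; exact hηtop)
    have hsummable : Summable (fun n => ∫ ω in Es (n+1), L (τs ω).toNat ω ∂P) := by
      apply Summable.congr (hqsum.mul_right (∫ ω in A 1, L 1 ω ∂P))
      intro n
      exact (hterm_val n).symm
    rw [hdecomp, tsum_eq_zero_add' hsummable, h0, zero_add]
    calc ∑' n, ∫ ω in Es (n+1), L (τs ω).toNat ω ∂P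
        = ∑' n : ℕ, (q ^ n).toReal * ∫ ω in A 1, L 1 ω ∂P := tsum_congr hterm_val
      _ = (∑' n : ℕ, (q ^ n).toReal) * ∫ ω in A 1, L 1 ω ∂P := tsum_mul_right
      _ = η.toReal * ∫ ω in A 1, L 1 ω ∂P := by
          rw [← ENNReal.tsum_toReal_eq (fun n => ENNReal.pow_ne_top hq_top), hgeom]
  have hratio_s : (∫ ω, L (τs ω).toNat ω ∂P) / (∫⁻ ω, (τs ω : ℝ≥0∞) ∂P).toReal
      = ∫ ω in A 1, L 1 ω ∂P := by
    rw [hτs_lint, hNum, mul_comm, mul_div_assoc, div_self hηR.ne', mul_one]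
  constructor
  · -- the optimality part
    intro τ hτ1 hst hfin hlτ hτint
    rw [hlτ, hratio_s]
    rw [div_le_iff₀ hηR]
    -- stopping-time events
    have hTmeas : ∀ k : ℕ, MeasurableSet {ω | τ ω ≤ (k:ℕ∞)} :=
      fun k => natFil_le hmeas k _ (hst k)
    have hTgt : ∀ k : ℕ, {ω | ((k:ℕ):ℕ∞) < τ ω} = {ω | τ ω ≤ (k:ℕ∞)}ᶜ := by
      intro k; ext ω; simp [not_le]
    have hTgt_meas : ∀ k : ℕ, MeasurableSet {ω | ((k:ℕ):ℕ∞) < τ ω} :=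
      fun k => by rw [hTgt]; exact (hTmeas k).compl
    have hTgtF : ∀ k : ℕ, MeasurableSet[natFil L k] {ω | ((k:ℕ):ℕ∞) < τ ω} :=
      fun k => by rw [hTgt]; exact (hst k).compl
    set Eτ : ℕ → Set Ω := fun k => {ω | τ ω = (k:ℕ∞)} with hEτdef
    have hEτ0 : Eτ 0 = ∅ := by
      ext ω
      simp only [hEτdef, Set.mem_setOf_eq, Set.mem_empty_iff_false, iff_false]
      intro h
      have := hτ1 ω
      rw [h] at this
      simp at this
    have hEτS : ∀ k, Eτ (k+1) = {ω | τ ω ≤ ((k+1:ℕ):ℕ∞)} ∩ {ω | τ ω ≤ ((k:ℕ):ℕ∞)}ᶜ := by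
      intro k
      ext ω
      simp only [hEτdef, Set.mem_setOf_eq, Set.mem_inter_iff, Set.mem_compl_iff, not_le]
      cases hcase : τ ω with
      | top =>
        constructor
        · intro h; exact absurd h (by exact_mod_cast ENat.top_ne_coe (k+1))
        · rintro ⟨h, _⟩
          rw [top_le_iff] at h
          exact absurd h (by exact_mod_cast ENat.coe_ne_top (k+1))
      | coe j =>
        push_cast
        constructor
        · intro h
          have hj : j = k+1 := by exact_mod_cast h
          subst hj
          constructor
          · exact_mod_cast le_rfl
          · exact_mod_cast Nat.lt_succ_self k
        · rintro ⟨h1, h2⟩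
          have h1' : j ≤ k+1 := by exact_mod_cast h1
          have h2' : k < j := by exact_mod_cast h2
          have : j = k+1 := by omega
          exact_mod_cast congrArg (Nat.cast : ℕ → ℕ∞) this
    have hEτ_meas : ∀ k, MeasurableSet (Eτ k) := by
      intro k
      match k with
      | 0 => rw [hEτ0]; exact MeasurableSet.empty
      | (j+1) => rw [hEτS j]; exact (hTmeas (j+1)).inter (hTmeas j).compl
    have hEτ_disj : Pairwise (Function.onFun Disjoint Eτ) := by
      intro i j hij
      simp only [Function.onFun, hEτdef]
      rw [Set.disjoint_left]
      intro ω hi hj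
      simp only [Set.mem_setOf_eq] at hi hj
      rw [hi] at hj
      exact hij (by exact_mod_cast hj)
    have hUnionEτ : (⋃ k, Eτ k) = {ω | τ ω ≠ ⊤} := by
      ext ω
      simp only [Set.mem_iUnion, hEτdef, Set.mem_setOf_eq]
      constructor
      · rintro ⟨k, hk⟩; rw [hk]; simp
      · intro h
        cases hcase : τ ω with
        | top => exact absurd hcase h
        | coe k => exact ⟨k, rfl⟩
    have hres_τ : P.restrict (⋃ k, Eτ k) = P := by
      have hcompl : (⋃ k, Eτ k)ᶜ = {ω | τ ω = ⊤} := by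
        rw [hUnionEτ]; ext ω; simp
      have hnull : P {ω | τ ω = ⊤} = 0 := by
        have hm : MeasurableSet {ω | τ ω ≠ ⊤} := by
          rw [← hUnionEτ]; exact MeasurableSet.iUnion hEτ_meas
        have := prob_compl_eq_one_sub (μ := P) hm
        rw [hfin] at this
        have h2 : {ω | τ ω ≠ ⊤}ᶜ = {ω | τ ω = ⊤} := by ext ω; simp
        rw [h2] at this
        simp at this
        exact this
      rw [Measure.restrict_congr_set (ae_eq_univ.2 (by rw [hcompl]; exact hnull)),
        Measure.restrict_univ]
    -- integrability of the positive part
    have hmaxτ_int : Integrable (fun ω => max (L (τ ω).toNat ω - α) 0) P :=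
      (hτint.sub (integrable_const α)).pos_part
    have hofmax : Measurable (fun x : ℝ => ENNReal.ofReal (max (x - α) 0)) :=
      ENNReal.measurable_ofReal.comp ((measurable_id.sub measurable_const).max measurable_const)
    have hlintg : ∀ n, 1 ≤ n → ∫⁻ ω, ENNReal.ofReal (max (L n ω - α) 0) ∂P
        = ENNReal.ofReal (∫ ω, max (L 1 ω - α) 0 ∂P) := by
      intro n hn
      rw [hlint_map (fun x => ENNReal.ofReal (max (x - α) 0)) hofmax n hn,
        ← ofReal_integral_eq_lintegral_ofReal hmax_int
          (Filter.Eventually.of_forall fun ω => le_max_right _ _)]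
    have hbound : ∫⁻ ω, ENNReal.ofReal (max (L (τ ω).toNat ω - α) 0) ∂P
        ≤ ENNReal.ofReal (∫ ω, max (L 1 ω - α) 0 ∂P) * η := by
      have hdecomp : ∫⁻ ω, ENNReal.ofReal (max (L (τ ω).toNat ω - α) 0) ∂P
          = ∑' k, ∫⁻ ω in Eτ k, ENNReal.ofReal (max (L (τ ω).toNat ω - α) 0) ∂P := by
        conv_lhs => rw [← hres_τ]
        exact lintegral_iUnion hEτ_meas hEτ_disj _
      have h0 : ∫⁻ ω in Eτ 0, ENNReal.ofReal (max (L (τ ω).toNat ω - α) 0) ∂P = 0 := by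
        rw [hEτ0]; simp
      have hterm : ∀ n, ∫⁻ ω in Eτ (n+1), ENNReal.ofReal (max (L (τ ω).toNat ω - α) 0) ∂P
          ≤ ENNReal.ofReal (∫ ω, max (L 1 ω - α) 0 ∂P) * P {ω | ((n:ℕ):ℕ∞) < τ ω} := by
        intro n
        have hcongr : ∫⁻ ω in Eτ (n+1), ENNReal.ofReal (max (L (τ ω).toNat ω - α) 0) ∂P
            = ∫⁻ ω in Eτ (n+1), ENNReal.ofReal (max (L (n+1) ω - α) 0) ∂P := by
          apply setLIntegral_congr_fun (hEτ_meas (n+1))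
          intro ω hω
          have hω' : τ ω = ((n+1 : ℕ) : ℕ∞) := hω
          simp only [hω', ENat.toNat_coe]
        rw [hcongr]
        calc ∫⁻ ω in Eτ (n+1), ENNReal.ofReal (max (L (n+1) ω - α) 0) ∂P
            ≤ ∫⁻ ω in {ω | ((n:ℕ):ℕ∞) < τ ω}, ENNReal.ofReal (max (L (n+1) ω - α) 0) ∂P := by
              apply lintegral_mono_set
              rw [hEτS n, hTgt n]
              exact Set.inter_subset_right
          _ = P {ω | ((n:ℕ):ℕ∞) < τ ω} * ∫⁻ ω, ENNReal.ofReal (max (L (n+1) ω - α) 0) ∂P :=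
              indep_lintegral hmeas hindep (by omega) (by omega)
                (hofmax.comp (Measurable.of_comap_le le_rfl)) (hTgtF n)
          _ = ENNReal.ofReal (∫ ω, max (L 1 ω - α) 0 ∂P) * P {ω | ((n:ℕ):ℕ∞) < τ ω} := by
              rw [hlintg (n+1) (by omega), mul_comm]
      calc ∫⁻ ω, ENNReal.ofReal (max (L (τ ω).toNat ω - α) 0) ∂P
          = ∑' k, ∫⁻ ω in Eτ k, ENNReal.ofReal (max (L (τ ω).toNat ω - α) 0) ∂P := hdecomp
        _ = ∑' n, ∫⁻ ω in Eτ (n+1), ENNReal.ofReal (max (L (τ ω).toNat ω - α) 0) ∂P := by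
            rw [tsum_eq_zero_add' ENNReal.summable, h0, zero_add]
        _ ≤ ∑' n, ENNReal.ofReal (∫ ω, max (L 1 ω - α) 0 ∂P) * P {ω | ((n:ℕ):ℕ∞) < τ ω} :=
            ENNReal.tsum_le_tsum hterm
        _ = ENNReal.ofReal (∫ ω, max (L 1 ω - α) 0 ∂P) * ∑' n, P {ω | ((n:ℕ):ℕ∞) < τ ω} :=
            ENNReal.tsum_mul_left
        _ = ENNReal.ofReal (∫ ω, max (L 1 ω - α) 0 ∂P) * η := by
            rw [← lintegral_enat hTgt_meas, hlτ]
    have hIR : ∫ ω, max (L (τ ω).toNat ω - α) 0 ∂P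
        ≤ (∫ ω, max (L 1 ω - α) 0 ∂P) * η.toReal := by
      have hnn : (0 : Ω → ℝ) ≤ᵐ[P] fun ω => max (L (τ ω).toNat ω - α) 0 :=
        Filter.Eventually.of_forall (fun ω => le_max_right _ _)
      rw [integral_eq_lintegral_of_nonneg_ae hnn hmaxτ_int.aestronglyMeasurable]
      have hne : ENNReal.ofReal (∫ ω, max (L 1 ω - α) 0 ∂P) * η ≠ ⊤ :=
        ENNReal.mul_ne_top ENNReal.ofReal_ne_top hηtop
      have := ENNReal.toReal_mono hne hbound
      rwa [ENNReal.toReal_mul, ENNReal.toReal_ofReal hlam.le] at this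
    -- conclusion
    have hptwise : ∀ ω, L (τ ω).toNat ω ≤ max (L (τ ω).toNat ω - α) 0 + α := by
      intro ω
      have := le_max_left (L (τ ω).toNat ω - α) 0
      linarith
    have h1 : ∫ ω, L (τ ω).toNat ω ∂P ≤ (∫ ω, max (L (τ ω).toNat ω - α) 0 ∂P) + α := by
      have := integral_mono hτint (hmaxτ_int.add (integrable_const α)) hptwise
      simp only [Pi.add_apply] at this
      rwa [integral_add hmaxτ_int (integrable_const α), integral_const, probReal_univ,
        one_smul] at this
    have hcancel : α * ((P (A 1)).toReal * η.toReal) = α := by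
      rw [hptoReal, inv_mul_cancel₀ hηR.ne', mul_one]
    calc ∫ ω, L (τ ω).toNat ω ∂P
        ≤ (∫ ω, max (L (τ ω).toNat ω - α) 0 ∂P) + α := h1
      _ ≤ (∫ ω, max (L 1 ω - α) 0 ∂P) * η.toReal + α := by linarith [hIR]
      _ = (∫ ω in A 1, L 1 ω ∂P) * η.toReal := by
          rw [hm_eq, add_mul, mul_assoc, hcancel]
  · exact hratio_s
end
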